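/- The function φ ↦ 1/Φ(φ) belongs to L²([−π,π]^d) (i.e. ∫_{[−π,π]^d} Φ(φ)^{−2} dφ < ∞) if and only if d ≥ 5. -/

import Mathlib

open MeasureTheory Real Filter
open scoped ENNReal

noncomputable section

/-- The Fourier symbol `Φ(φ) = 2 ∑_j (1 - cos φ_j)` of the negative discrete Laplacian on `ℤ^d`. -/
def Phi (d : ℕ) (φ : Fin d → ℝ) : ℝ := 2 * ∑ j, (1 - Real.cos (φ j))

/-- The cube `[-π, π]^d`. -/
def cube (d : ℕ) : Set (Fin d → ℝ) := Set.univ.pi fun _ => Set.Icc (-π) π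

/-- `I(λ) = (2π)^{-d} ∫_{[-π,π]^d} (λ + Φ(φ))⁻¹ dφ` (Bochner integral, real-valued). -/
def Ir (d : ℕ) (lam : ℝ) : ℝ := ((2 * π) ^ d)⁻¹ * ∫ φ in cube d, (lam + Phi d φ)⁻¹

lemma cube_eq_closedBall (d : ℕ) : cube d = Metric.closedBall (0 : Fin d → ℝ) π := by
  rw [closedBall_pi _ Real.pi_nonneg]
  simp [cube, Real.closedBall_eq_Icc]
lemma continuous_Phi (d : ℕ) : Continuous (Phi d) := by
  unfold Phi; fun_prop
lemma norm_sq_le_sum {d : ℕ} (φ : Fin d → ℝ) : ‖φ‖ ^ 2 ≤ ∑ j, (φ j) ^ 2 := by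
  rcases Nat.eq_zero_or_pos d with h | h
  · subst h
    have hφ : φ = 0 := Subsingleton.elim φ 0
    simp [hφ, Pi.norm_def]
  · have : Nonempty (Fin d) := Fin.pos_iff_nonempty.mp h
    obtain ⟨i, -, hi⟩ := Finset.exists_mem_eq_sup (Finset.univ : Finset (Fin d))
      Finset.univ_nonempty (fun j => ‖φ j‖₊)
    have hn : ‖φ‖ = ‖φ i‖ := by
      rw [Pi.norm_def, hi]; rfl
    rw [hn]
    calc ‖φ i‖ ^ 2 = (φ i) ^ 2 := by rw [Real.norm_eq_abs, sq_abs]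
    _ ≤ ∑ j, (φ j) ^ 2 :=
      Finset.single_le_sum (fun j _ => sq_nonneg (φ j)) (Finset.mem_univ i)
lemma sum_sq_le {d : ℕ} (φ : Fin d → ℝ) : ∑ j, (φ j) ^ 2 ≤ d * ‖φ‖ ^ 2 := by
  calc ∑ j, (φ j) ^ 2 ≤ ∑ _j : Fin d, ‖φ‖ ^ 2 := by
        refine Finset.sum_le_sum fun j _ => ?_
        have h1 : |φ j| ≤ ‖φ‖ := by
          simpa [Real.norm_eq_abs] using norm_le_pi_norm φ j
        calc (φ j) ^ 2 = |φ j| ^ 2 := (sq_abs _).symm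
          _ ≤ ‖φ‖ ^ 2 := by nlinarith [abs_nonneg (φ j)]
    _ = d * ‖φ‖ ^ 2 := by simp [Finset.sum_const, nsmul_eq_mul]
lemma Phi_le {d : ℕ} (φ : Fin d → ℝ) : Phi d φ ≤ d * ‖φ‖ ^ 2 := by
  have h1 : ∀ j, 2 * (1 - Real.cos (φ j)) ≤ (φ j) ^ 2 := fun j => by
    have := Real.one_sub_sq_div_two_le_cos (x := φ j)
    linarith
  calc Phi d φ = ∑ j, 2 * (1 - Real.cos (φ j)) := by
        rw [Phi, Finset.mul_sum]
    _ ≤ ∑ j, (φ j) ^ 2 := Finset.sum_le_sum fun j _ => h1 j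
    _ ≤ d * ‖φ‖ ^ 2 := sum_sq_le φ
lemma Phi_ge {d : ℕ} {φ : Fin d → ℝ} (hφ : φ ∈ cube d) :
    4 / π ^ 2 * ‖φ‖ ^ 2 ≤ Phi d φ := by
  have h1 : ∀ j, 4 / π ^ 2 * (φ j) ^ 2 ≤ 2 * (1 - Real.cos (φ j)) := by
    intro j
    have hj : φ j ∈ Set.Icc (-π) π := hφ j (Set.mem_univ j)
    have habs : |φ j| ≤ π := abs_le.mpr ⟨hj.1, hj.2⟩
    have := Real.cos_le_one_sub_mul_cos_sq habs
    have hpi := Real.pi_pos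
    have h2 : 2 / π ^ 2 * (φ j) ^ 2 ≤ 1 - Real.cos (φ j) := by linarith
    calc 4 / π ^ 2 * (φ j) ^ 2 = 2 * (2 / π ^ 2 * (φ j) ^ 2) := by ring
      _ ≤ 2 * (1 - Real.cos (φ j)) := by linarith
  calc 4 / π ^ 2 * ‖φ‖ ^ 2 ≤ 4 / π ^ 2 * ∑ j, (φ j) ^ 2 := by
        have hpi := Real.pi_pos
        have := norm_sq_le_sum φ
        have h4 : (0:ℝ) < 4 / π ^ 2 := by positivity
        nlinarith
    _ ≤ ∑ j, 2 * (1 - Real.cos (φ j)) := by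
        rw [Finset.mul_sum]
        exact Finset.sum_le_sum fun j _ => h1 j
    _ = Phi d φ := by rw [Phi, Finset.mul_sum]
def Ann (d k : ℕ) : Set (Fin d → ℝ) :=
  Metric.closedBall 0 (π / 2 ^ k) \ Metric.closedBall 0 (π / 2 ^ (k + 1))
lemma mem_Ann {d k : ℕ} {x : Fin d → ℝ} :
    x ∈ Ann d k ↔ π / 2 ^ (k + 1) < ‖x‖ ∧ ‖x‖ ≤ π / 2 ^ k := by
  simp only [Ann, Set.mem_diff, Metric.mem_closedBall, dist_zero_right, not_le]
  tauto
lemma measurableSet_Ann (d k : ℕ) : MeasurableSet (Ann d k) :=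
  Metric.isClosed_closedBall.measurableSet.diff Metric.isClosed_closedBall.measurableSet
lemma Ann_disjoint (d : ℕ) : Pairwise (Function.onFun Disjoint (Ann d)) := by
  have key : ∀ k l : ℕ, k < l → ∀ x : Fin d → ℝ, x ∈ Ann d k → x ∉ Ann d l := by
    intro k l hkl x hxk hxl
    rw [mem_Ann] at hxk hxl
    have h1 : π / 2 ^ l ≤ π / 2 ^ (k + 1) := by
      apply div_le_div_of_nonneg_left Real.pi_nonneg (by positivity)
      exact pow_le_pow_right₀ one_le_two hkl
    linarith [hxk.1, hxl.2]
  intro k l hkl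
  rcases hkl.lt_or_gt with h | h
  · exact Set.disjoint_left.mpr fun x hx hx' => key k l h x hx hx'
  · exact Set.disjoint_right.mpr fun x hx hx' => key l k h x hx hx'
lemma volume_pi_closedBall' (d : ℕ) {r : ℝ} (hr : 0 ≤ r) :
    volume (Metric.closedBall (0 : Fin d → ℝ) r) = ENNReal.ofReal (2 * r) ^ d := by
  rw [Real.volume_pi_closedBall 0 hr, Fintype.card_fin, ENNReal.ofReal_pow (by positivity)]

lemma ofReal_two_mul_div_pow (k : ℕ) :
    ENNReal.ofReal (2 * (π / 2 ^ k)) = ENNReal.ofReal (2 * π) * (2 : ℝ≥0∞)⁻¹ ^ k := by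
  have h : 2 * (π / 2 ^ k) = (2 * π) * ((2 : ℝ)⁻¹) ^ k := by
    rw [inv_pow]
    field_simp
  rw [h, ENNReal.ofReal_mul (by positivity), ENNReal.ofReal_pow (by norm_num),
    ENNReal.ofReal_inv_of_pos (by norm_num : (0:ℝ) < 2)]
  norm_num
lemma volume_ball_k (d k : ℕ) :
    volume (Metric.closedBall (0 : Fin d → ℝ) (π / 2 ^ k)) =
      ENNReal.ofReal (2 * π) ^ d * (2 : ℝ≥0∞)⁻¹ ^ (k * d) := by
  rw [volume_pi_closedBall' d (by positivity), ofReal_two_mul_div_pow, mul_pow, ← pow_mul]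
lemma Ann_subset_cube (d k : ℕ) : Ann d k ⊆ cube d := by
  rw [cube_eq_closedBall]
  refine Set.diff_subset.trans (Metric.closedBall_subset_closedBall ?_)
  calc π / 2 ^ k ≤ π / 1 := by
        apply div_le_div_of_nonneg_left Real.pi_nonneg one_pos
        exact one_le_pow₀ one_le_two
    _ = π := div_one π
lemma cube_subset_cover (d : ℕ) : cube d ⊆ {0} ∪ ⋃ k, Ann d k := by
  intro x hx
  by_cases hx0 : x = 0
  · exact Or.inl hx0
  right
  have hle : ‖x‖ ≤ π := by
    rw [cube_eq_closedBall] at hx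
    simpa [dist_zero_right] using hx
  have hpos : 0 < ‖x‖ := norm_pos_iff.mpr hx0
  have hex : ∃ n : ℕ, π / 2 ^ (n + 1) < ‖x‖ := by
    obtain ⟨n, hn⟩ := exists_pow_lt_of_lt_one (div_pos hpos Real.pi_pos)
      (by norm_num : (2:ℝ)⁻¹ < 1)
    refine ⟨n, ?_⟩
    have h2 : ((2:ℝ)⁻¹) ^ n = (2 ^ n)⁻¹ := by rw [inv_pow]
    rw [h2] at hn
    have hp : (0:ℝ) < 2 ^ (n+1) := by positivity
    rw [div_lt_iff₀ hp]
    have hp2 : (0:ℝ) < 2 ^ n := by positivity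
    have h3 : (2:ℝ) ^ (n+1) = 2 * 2 ^ n := by ring
    have h4 : π * (2 ^ n)⁻¹ < ‖x‖ := by
      have := mul_lt_mul_of_pos_left hn Real.pi_pos
      calc π * (2 ^ n)⁻¹ < π * (‖x‖ / π) := this
        _ = ‖x‖ := by field_simp
    rw [h3]
    have h5 : (2:ℝ) ^ n * (2 ^ n)⁻¹ = 1 := mul_inv_cancel₀ hp2.ne'
    nlinarith [mul_lt_mul_of_pos_right h4 hp2, h5, hpos]
  classical
  let k := Nat.find hex
  refine Set.mem_iUnion.mpr ⟨k, mem_Ann.mpr ⟨Nat.find_spec hex, ?_⟩⟩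
  rcases Nat.eq_zero_or_pos k with h0 | h0
  · rw [h0]; simpa using hle
  · obtain ⟨m, hm⟩ := Nat.exists_eq_succ_of_ne_zero h0.ne'
    have := Nat.find_min hex (m := m) (by omega)
    rw [hm]
    push_neg at this
    exact this
lemma measurable_g (d : ℕ) :
    Measurable fun φ => ENNReal.ofReal ((Phi d φ ^ 2)⁻¹) :=
  (((continuous_Phi d).pow 2).measurable.inv).ennreal_ofReal
lemma sixteen_mul_inv_pow {d : ℕ} (hd : 4 ≤ d) :
    (16 : ℝ≥0∞) * (2:ℝ≥0∞)⁻¹ ^ d = (2:ℝ≥0∞)⁻¹ ^ (d - 4) := by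
  have h4 : (2:ℝ≥0∞)⁻¹ ^ 4 = 16⁻¹ := by
    rw [← ENNReal.inv_pow]; norm_num
  have hdd : d = (d - 4) + 4 := (Nat.sub_add_cancel hd).symm
  rw [hdd]
  rw [pow_add, h4, mul_comm ((2:ℝ≥0∞)⁻¹ ^ (d-4)), ← mul_assoc,
    ENNReal.mul_inv_cancel (by norm_num) (by norm_num), one_mul]
  simp [Nat.sub_add_cancel hd]
lemma Phi_ge_on_Ann {d k : ℕ} {φ : Fin d → ℝ} (hφ : φ ∈ Ann d k) :
    ((4:ℝ) ^ k)⁻¹ ≤ Phi d φ := by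
  have h1 := Phi_ge (Ann_subset_cube d k hφ)
  have h2 := (mem_Ann.mp hφ).1
  have hpi := Real.pi_pos
  have hkey : 4 / π ^ 2 * (π / 2 ^ (k+1)) ^ 2 = ((4:ℝ) ^ k)⁻¹ := by
    rw [div_pow]
    have h3 : ((2:ℝ) ^ (k+1)) ^ 2 = 4 * 4 ^ k := by
      calc ((2:ℝ) ^ (k+1)) ^ 2 = ((2:ℝ) ^ 2) ^ (k+1) := by
            rw [← pow_mul, ← pow_mul, mul_comm]
        _ = (4:ℝ) ^ (k+1) := by norm_num
        _ = 4 * 4 ^ k := by rw [pow_succ]; ring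
    rw [h3]
    field_simp
  have h4 : 4 / π ^ 2 * (π / 2 ^ (k+1)) ^ 2 ≤ 4 / π ^ 2 * ‖φ‖ ^ 2 := by
    have hc : (0:ℝ) < 4 / π ^ 2 := by positivity
    have : (π / 2 ^ (k+1)) ^ 2 ≤ ‖φ‖ ^ 2 :=
      pow_le_pow_left₀ (by positivity) h2.le 2
    nlinarith
  linarith [hkey ▸ h4]
lemma finite_case {d : ℕ} (hd : 5 ≤ d) :
    (∫⁻ φ in cube d, ENNReal.ofReal (((Phi d φ) ^ 2)⁻¹)) < ⊤ := by
  set g : (Fin d → ℝ) → ℝ≥0∞ := fun φ => ENNReal.ofReal ((Phi d φ ^ 2)⁻¹) with hg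
  set C : ℝ≥0∞ := ENNReal.ofReal (2 * π) ^ d with hC
  set r : ℝ≥0∞ := (2:ℝ≥0∞)⁻¹ ^ (d - 4) with hr
  have hterm : ∀ k, ∫⁻ φ in Ann d k, g φ ≤ C * r ^ k := by
    intro k
    have hbound : ∀ φ ∈ Ann d k, g φ ≤ (16 : ℝ≥0∞) ^ k := by
      intro φ hφ
      have h1 := Phi_ge_on_Ann hφ
      have hp4 : (0:ℝ) < ((4:ℝ) ^ k)⁻¹ := by positivity
      have h2 : ((Phi d φ) ^ 2)⁻¹ ≤ (16:ℝ) ^ k := by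
        have hsq : (((4:ℝ) ^ k)⁻¹) ^ 2 ≤ (Phi d φ) ^ 2 := by nlinarith
        have h3 : (((4:ℝ) ^ k)⁻¹ ^ 2) = ((16:ℝ) ^ k)⁻¹ := by
          rw [inv_pow, ← pow_mul]
          congr 1
          rw [mul_comm, pow_mul]
          norm_num
        calc ((Phi d φ) ^ 2)⁻¹ ≤ ((((4:ℝ) ^ k)⁻¹) ^ 2)⁻¹ := by
              apply inv_anti₀ (by positivity) hsq
          _ = (16:ℝ) ^ k := by rw [h3, inv_inv]
      calc g φ ≤ ENNReal.ofReal ((16:ℝ) ^ k) := ENNReal.ofReal_le_ofReal h2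
        _ = (16 : ℝ≥0∞) ^ k := by
            rw [ENNReal.ofReal_pow (by norm_num)]
            norm_num
    calc ∫⁻ φ in Ann d k, g φ ≤ ∫⁻ _ in Ann d k, (16:ℝ≥0∞) ^ k :=
          setLIntegral_mono measurable_const hbound
      _ = (16:ℝ≥0∞) ^ k * volume (Ann d k) := setLIntegral_const _ _
      _ ≤ (16:ℝ≥0∞) ^ k * (C * (2:ℝ≥0∞)⁻¹ ^ (k * d)) := by
          gcongr
          rw [← volume_ball_k d k]
          exact measure_mono Set.diff_subset
      _ = C * r ^ k := by
          rw [hr, ← sixteen_mul_inv_pow (by omega)]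
          rw [mul_pow, ← pow_mul, mul_comm d k]
          ring
  calc (∫⁻ φ in cube d, g φ)
      ≤ ∫⁻ φ in ({0} ∪ ⋃ k, Ann d k), g φ := lintegral_mono_set (cube_subset_cover d)
    _ ≤ (∫⁻ φ in ({0} : Set (Fin d → ℝ)), g φ) + ∫⁻ φ in ⋃ k, Ann d k, g φ :=
        lintegral_union_le _ _ _
    _ ≤ 0 + ∑' k, ∫⁻ φ in Ann d k, g φ := by
        gcongr
        · rw [lintegral_singleton]
          have : Phi d 0 = 0 := by simp [Phi]
          simp [hg, this]
        · exact lintegral_iUnion_le _ _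
    _ ≤ 0 + ∑' k, C * r ^ k := by gcongr with k; exact hterm k
    _ = C * (1 - r)⁻¹ := by rw [zero_add, ENNReal.tsum_mul_left, ENNReal.tsum_geometric]
    _ < ⊤ := by
        apply ENNReal.mul_lt_top
        · exact (ENNReal.pow_lt_top ENNReal.ofReal_lt_top)
        · have hrlt : r < 1 := by
            rw [hr]
            exact pow_lt_one₀ (by positivity) (ENNReal.inv_lt_one.mpr ENNReal.one_lt_two) (by omega)
          exact ENNReal.inv_lt_top.mpr (tsub_pos_of_lt hrlt)
lemma volume_Ann_ge {d : ℕ} (hd : 1 ≤ d) (k : ℕ) :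
    ENNReal.ofReal (2 * π) ^ d * (2 : ℝ≥0∞)⁻¹ ^ (k * d) * 2⁻¹ ≤ volume (Ann d k) := by
  set C : ℝ≥0∞ := ENNReal.ofReal (2 * π) ^ d with hC
  have hsub : Metric.closedBall (0 : Fin d → ℝ) (π / 2 ^ (k+1)) ⊆
      Metric.closedBall 0 (π / 2 ^ k) := by
    apply Metric.closedBall_subset_closedBall
    apply div_le_div_of_nonneg_left Real.pi_nonneg (by positivity)
    exact pow_le_pow_right₀ one_le_two (Nat.le_succ k)
  have hfin : volume (Metric.closedBall (0 : Fin d → ℝ) (π / 2 ^ (k+1))) ≠ ⊤ := by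
    rw [volume_ball_k]
    exact (ENNReal.mul_lt_top (ENNReal.pow_lt_top ENNReal.ofReal_lt_top)
      (ENNReal.pow_lt_top (ENNReal.inv_lt_top.mpr two_pos))).ne
  have hvol : volume (Ann d k) =
      C * (2:ℝ≥0∞)⁻¹ ^ (k * d) - C * (2:ℝ≥0∞)⁻¹ ^ ((k+1) * d) := by
    rw [Ann, measure_diff hsub Metric.isClosed_closedBall.measurableSet.nullMeasurableSet hfin,
      volume_ball_k, volume_ball_k]
  rw [hvol]
  set a : ℝ≥0∞ := C * (2:ℝ≥0∞)⁻¹ ^ (k * d) with ha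
  have hafin : a ≠ ⊤ := by
    rw [ha]
    exact (ENNReal.mul_lt_top (ENNReal.pow_lt_top ENNReal.ofReal_lt_top)
      (ENNReal.pow_lt_top (ENNReal.inv_lt_top.mpr two_pos))).ne
  have hterm : C * (2:ℝ≥0∞)⁻¹ ^ ((k+1) * d) = a * (2:ℝ≥0∞)⁻¹ ^ d := by
    rw [ha, mul_assoc, ← pow_add]
    ring_nf
  rw [hterm]
  have hhalf : (2:ℝ≥0∞)⁻¹ ^ d ≤ 2⁻¹ := by
    calc (2:ℝ≥0∞)⁻¹ ^ d ≤ (2:ℝ≥0∞)⁻¹ ^ 1 :=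
          pow_le_pow_of_le_one (by positivity) (ENNReal.inv_le_one.mpr one_le_two) hd
      _ = 2⁻¹ := pow_one _
  calc a * 2⁻¹ = a - a * 2⁻¹ := by
        have h2 : a * 2⁻¹ + a * 2⁻¹ = a := by
          rw [← mul_add, ENNReal.inv_two_add_inv_two, mul_one]
        exact (ENNReal.sub_eq_of_eq_add (ENNReal.mul_ne_top hafin (by norm_num))
          h2.symm).symm
    _ ≤ a - a * (2:ℝ≥0∞)⁻¹ ^ d := by
        apply tsub_le_tsub_left
        exact mul_le_mul_right hhalf a
lemma infinite_case {d : ℕ} (hd1 : 1 ≤ d) (hd : d ≤ 4) :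
    (∫⁻ φ in cube d, ENNReal.ofReal (((Phi d φ) ^ 2)⁻¹)) = ⊤ := by
  set g : (Fin d → ℝ) → ℝ≥0∞ := fun φ => ENNReal.ofReal ((Phi d φ ^ 2)⁻¹) with hg
  set C : ℝ≥0∞ := ENNReal.ofReal (2 * π) ^ d with hC
  set c0 : ℝ≥0∞ := ENNReal.ofReal ((((d:ℝ) * π ^ 2) ^ 2)⁻¹) with hc0
  have hpi := Real.pi_pos
  have hd0 : (0:ℝ) < d := by exact_mod_cast hd1
  -- pointwise lower bound on the annulus
  have hbound : ∀ k, ∀ φ ∈ Ann d k, (16:ℝ≥0∞) ^ k * c0 ≤ g φ := by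
    intro k φ hφ
    have h1 : Phi d φ ≤ d * (π / 2 ^ k) ^ 2 := by
      have h2 := (mem_Ann.mp hφ).2
      have h3 : ‖φ‖ ^ 2 ≤ (π / 2 ^ k) ^ 2 := pow_le_pow_left₀ (norm_nonneg φ) h2 2
      calc Phi d φ ≤ d * ‖φ‖ ^ 2 := Phi_le φ
        _ ≤ d * (π / 2 ^ k) ^ 2 := by nlinarith
    have hpos : (0:ℝ) < Phi d φ := lt_of_lt_of_le (by positivity) (Phi_ge_on_Ann hφ)
    have h4 : (Phi d φ) ^ 2 ≤ ((d:ℝ) * π ^ 2) ^ 2 * ((16:ℝ) ^ k)⁻¹ := by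
      have h5 : (d:ℝ) * (π / 2 ^ k) ^ 2 = (d:ℝ) * π ^ 2 * ((4:ℝ) ^ k)⁻¹ := by
        rw [div_pow]
        have h6 : ((2:ℝ) ^ k) ^ 2 = 4 ^ k := by
          rw [← pow_mul, mul_comm, pow_mul]; norm_num
        rw [h6]
        field_simp
      have h7 : (Phi d φ) ^ 2 ≤ ((d:ℝ) * π ^ 2 * ((4:ℝ) ^ k)⁻¹) ^ 2 := by
        rw [← h5]
        exact pow_le_pow_left₀ hpos.le h1 2
      calc (Phi d φ) ^ 2 ≤ ((d:ℝ) * π ^ 2 * ((4:ℝ) ^ k)⁻¹) ^ 2 := h7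
        _ = ((d:ℝ) * π ^ 2) ^ 2 * ((16:ℝ) ^ k)⁻¹ := by
            rw [mul_pow, inv_pow, ← pow_mul, mul_comm k 2, pow_mul]
            norm_num
    have h8 : (16:ℝ) ^ k * (((d:ℝ) * π ^ 2) ^ 2)⁻¹ ≤ ((Phi d φ) ^ 2)⁻¹ := by
      have h9 : (16:ℝ) ^ k * (((d:ℝ) * π ^ 2) ^ 2)⁻¹ =
          (((d:ℝ) * π ^ 2) ^ 2 * ((16:ℝ) ^ k)⁻¹)⁻¹ := by
        rw [mul_inv, inv_inv]
        ring
      rw [h9]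
      exact inv_anti₀ (by positivity) h4
    calc (16:ℝ≥0∞) ^ k * c0 = ENNReal.ofReal ((16:ℝ) ^ k * (((d:ℝ) * π ^ 2) ^ 2)⁻¹) := by
          rw [ENNReal.ofReal_mul (by positivity), ENNReal.ofReal_pow (by norm_num)]
          norm_num [hc0]
      _ ≤ g φ := ENNReal.ofReal_le_ofReal h8
  -- per-annulus lower bound by a uniform constant
  set c' : ℝ≥0∞ := c0 * (C * 2⁻¹) with hc'
  have hterm : ∀ k, c' ≤ ∫⁻ φ in Ann d k, g φ := by
    intro k
    calc c' = c0 * (C * 2⁻¹) := hc'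
      _ ≤ ((16:ℝ≥0∞) ^ k * c0) * (C * (2:ℝ≥0∞)⁻¹ ^ (k * d) * 2⁻¹) := by
          have h16 : (1:ℝ≥0∞) ≤ 16 ^ k * (2:ℝ≥0∞)⁻¹ ^ (k * d) := by
            have : (16:ℝ≥0∞) ^ k * (2:ℝ≥0∞)⁻¹ ^ (k * d) = (16 * (2:ℝ≥0∞)⁻¹ ^ d) ^ k := by
              rw [mul_pow, ← pow_mul, mul_comm d k]
            rw [this]
            have hb : (1:ℝ≥0∞) ≤ 16 * (2:ℝ≥0∞)⁻¹ ^ d := by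
              have hq1 : (2:ℝ≥0∞)⁻¹ ^ 4 ≤ 2⁻¹ ^ d :=
                pow_le_pow_of_le_one (by positivity) (ENNReal.inv_le_one.mpr one_le_two) hd
              have hq2 : (2:ℝ≥0∞)⁻¹ ^ 4 = 16⁻¹ := by rw [← ENNReal.inv_pow]; norm_num
              calc (1:ℝ≥0∞) = 16 * 16⁻¹ :=
                    (ENNReal.mul_inv_cancel (by norm_num) (by norm_num)).symm
                _ ≤ 16 * 2⁻¹ ^ d := by rw [← hq2]; exact mul_le_mul_right hq1 _
            exact one_le_pow_of_one_le' hb k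
          calc c0 * (C * 2⁻¹) = 1 * (c0 * (C * 2⁻¹)) := (one_mul _).symm
            _ ≤ (16 ^ k * (2:ℝ≥0∞)⁻¹ ^ (k * d)) * (c0 * (C * 2⁻¹)) :=
                mul_le_mul_left h16 _
            _ = ((16:ℝ≥0∞) ^ k * c0) * (C * (2:ℝ≥0∞)⁻¹ ^ (k * d) * 2⁻¹) := by ring
      _ ≤ ((16:ℝ≥0∞) ^ k * c0) * volume (Ann d k) :=
          mul_le_mul_right (volume_Ann_ge hd1 k) _
      _ = ∫⁻ _ in Ann d k, ((16:ℝ≥0∞) ^ k * c0) := (setLIntegral_const _ _).symm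
      _ ≤ ∫⁻ φ in Ann d k, g φ := setLIntegral_mono (measurable_g d) (hbound k)
  have hc'0 : c' ≠ 0 := by
    rw [hc']
    apply mul_ne_zero
    · rw [hc0]
      simp only [ne_eq, ENNReal.ofReal_eq_zero, not_le]
      positivity
    · apply mul_ne_zero
      · rw [hC]
        apply pow_ne_zero
        simp only [ne_eq, ENNReal.ofReal_eq_zero, not_le]
        positivity
      · norm_num
  have hunion : (⋃ k, Ann d k) ⊆ cube d := Set.iUnion_subset fun k => Ann_subset_cube d k
  refine top_le_iff.mp ?_
  calc (⊤ : ℝ≥0∞) = ∑' _ : ℕ, c' := (ENNReal.tsum_const_eq_top_of_ne_zero hc'0).symm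
    _ ≤ ∑' k, ∫⁻ φ in Ann d k, g φ := ENNReal.tsum_le_tsum hterm
    _ = ∫⁻ φ in ⋃ k, Ann d k, g φ :=
        (lintegral_iUnion (measurableSet_Ann d) (Ann_disjoint d) g).symm
    _ ≤ ∫⁻ φ in cube d, g φ := lintegral_mono_set hunion

/-- `φ ↦ 1/Φ(φ)` belongs to `L²([-π,π]^d)`, i.e. `∫ Φ(φ)^{-2} dφ < ∞`,
if and only if `d ≥ 5`. -/
theorem inv_Phi_memL2_iff (d : ℕ) (hd : 1 ≤ d) :
    ((∫⁻ φ in cube d, ENNReal.ofReal (((Phi d φ) ^ 2)⁻¹)) < ⊤ ↔ 5 ≤ d) ∧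
      (IntegrableOn (fun φ => ((Phi d φ) ^ 2)⁻¹) (cube d) ↔ 5 ≤ d) := by
  have key : (∫⁻ φ in cube d, ENNReal.ofReal (((Phi d φ) ^ 2)⁻¹)) < ⊤ ↔ 5 ≤ d := by
    constructor
    · intro h
      by_contra h5
      rw [infinite_case hd (by omega)] at h
      exact lt_irrefl _ h
    · exact fun h5 => finite_case h5
  refine ⟨key, ?_⟩
  have hiff : IntegrableOn (fun φ => ((Phi d φ) ^ 2)⁻¹) (cube d) ↔
      (∫⁻ φ in cube d, ENNReal.ofReal (((Phi d φ) ^ 2)⁻¹)) < ⊤ := by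
    have h0 : 0 ≤ᵐ[volume.restrict (cube d)] fun φ => ((Phi d φ) ^ 2)⁻¹ :=
      Filter.Eventually.of_forall fun φ => by positivity
    constructor
    · intro h
      exact (hasFiniteIntegral_iff_ofReal h0).mp h.hasFiniteIntegral
    · intro h
      exact ⟨(((continuous_Phi d).pow 2).measurable.inv).aestronglyMeasurable,
        (hasFiniteIntegral_iff_ofReal h0).mpr h⟩
  rw [hiff]
  exact key
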